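/- Let X be a complex Banach space, let A be a closed linear operator in X, let h ∈ L¹(ℝⁿ), and let f : ℝⁿ → X be bounded and continuous with f(s) ∈ D(A) for all s ∈ ℝⁿ and with s ↦ Af(s) bounded. Suppose there exists a sequence (τ_k) in ℝⁿ with |τ_k| → +∞ such that f(·+τ_k) → Af(·) uniformly on compact subsets of ℝⁿ. Then the convolution H(t) := ∫_{ℝⁿ} h(t−s) f(s) ds is well defined, bounded and continuous, H(t) ∈ D(A) with AH(t) = ∫_{ℝⁿ} h(t−s) Af(s) ds for all t ∈ ℝⁿ, and H(·+τ_k) → AH(·) uniformly on compact subsets of ℝⁿ. -/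

import Mathlib

open MeasureTheory Filter Topology

open Metric Set Convolution

section Helpers
variable {n : ℕ} {X : Type*} [NormedAddCommGroup X] [NormedSpace ℂ X]


lemma conv_int (h : EuclideanSpace ℝ (Fin n) → ℂ) (hh : Integrable h)
    (g : EuclideanSpace ℝ (Fin n) → X) (hg : AEStronglyMeasurable g volume)
    (C : ℝ) (hC : ∀ s, ‖g s‖ ≤ C) (t : EuclideanSpace ℝ (Fin n)) :
    Integrable (fun s => h (t - s) • g s) :=
  (hh.comp_sub_left t).smul_of_top_left (memLp_top_of_bound hg C (Eventually.of_forall hC))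

lemma conv_bound (h : EuclideanSpace ℝ (Fin n) → ℂ) (hh : Integrable h)
    (g : EuclideanSpace ℝ (Fin n) → X) (hg : AEStronglyMeasurable g volume)
    (C : ℝ) (hC : ∀ s, ‖g s‖ ≤ C) (hC0 : 0 ≤ C) (t : EuclideanSpace ℝ (Fin n)) :
    ‖∫ s, h (t - s) • g s‖ ≤ (∫ x, ‖h x‖) * C := by
  calc ‖∫ s, h (t - s) • g s‖ ≤ ∫ s, ‖h (t - s) • g s‖ := norm_integral_le_integral_norm _
    _ ≤ ∫ s, ‖h (t - s)‖ * C := by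
        refine integral_mono_of_nonneg (Eventually.of_forall fun s => norm_nonneg _)
          (((hh.comp_sub_left t).norm).mul_const C) (Eventually.of_forall fun s => ?_)
        simp only [norm_smul]
        exact mul_le_mul_of_nonneg_left (hC s) (norm_nonneg _)
    _ = (∫ s, ‖h (t - s)‖) * C := integral_mul_const C _
    _ = (∫ x, ‖h x‖) * C := by rw [integral_sub_left_eq_self (fun x => ‖h x‖) volume t]

lemma tail_small (h : EuclideanSpace ℝ (Fin n) → ℂ) (hh : Integrable h)
    {ε : ℝ} (hε : 0 < ε) :
    ∃ R : ℝ, 0 < R ∧ ∫ x in (Metric.closedBall (0 : EuclideanSpace ℝ (Fin n)) R)ᶜ, ‖h x‖ < ε := by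
  have hmono : Monotone (fun k : ℕ => Metric.closedBall (0 : EuclideanSpace ℝ (Fin n)) k) :=
    fun a b hab => Metric.closedBall_subset_closedBall (by exact_mod_cast hab)
  have hunion : (⋃ k : ℕ, Metric.closedBall (0 : EuclideanSpace ℝ (Fin n)) k) = Set.univ :=
    Metric.iUnion_closedBall_nat 0
  have htend := MeasureTheory.tendsto_setIntegral_of_monotone
    (fun k : ℕ => measurableSet_closedBall) hmono
    (by rw [hunion]; exact hh.norm.integrableOn)
  rw [hunion, setIntegral_univ] at htend
  have htend2 : Tendsto (fun k : ℕ =>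
      ∫ x in (Metric.closedBall (0 : EuclideanSpace ℝ (Fin n)) k)ᶜ, ‖h x‖) atTop (𝓝 0) := by
    have heq : ∀ k : ℕ, ∫ x in (Metric.closedBall (0 : EuclideanSpace ℝ (Fin n)) k)ᶜ, ‖h x‖
        = (∫ x, ‖h x‖) - ∫ x in Metric.closedBall (0 : EuclideanSpace ℝ (Fin n)) k, ‖h x‖ := by
      intro k
      rw [eq_sub_iff_add_eq, add_comm]
      exact integral_add_compl measurableSet_closedBall hh.norm
    simp only [heq]
    have := tendsto_const_nhds (x := ∫ x, ‖h x‖) (f := atTop (α := ℕ)) |>.sub htend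
    simpa using this
  have := (htend2.eventually (eventually_lt_nhds hε)).exists
  obtain ⟨k, hk⟩ := this
  refine ⟨k + 1, by positivity, lt_of_le_of_lt ?_ hk⟩
  apply setIntegral_mono_set hh.norm.integrableOn
    (Eventually.of_forall fun x => norm_nonneg _)
  exact Eventually.of_forall (Set.compl_subset_compl.2
    (Metric.closedBall_subset_closedBall (by linarith)))


lemma conv_est (h : EuclideanSpace ℝ (Fin n) → ℂ) (hh : Integrable h)
    (g : EuclideanSpace ℝ (Fin n) → X) (hg : AEStronglyMeasurable g volume)
    (C : ℝ) (hC : ∀ s, ‖g s‖ ≤ C) (hC0 : 0 ≤ C)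
    (R M ε : ℝ) (hε0 : 0 ≤ ε)
    (hsmall : ∀ s ∈ Metric.closedBall (0 : EuclideanSpace ℝ (Fin n)) (M + R), ‖g s‖ ≤ ε)
    (t : EuclideanSpace ℝ (Fin n)) (ht : ‖t‖ ≤ M) :
    ‖∫ s, h (t - s) • g s‖ ≤ (∫ x, ‖h x‖) * ε
      + (∫ x in (Metric.closedBall (0 : EuclideanSpace ℝ (Fin n)) R)ᶜ, ‖h x‖) * C := by
  set K' := Metric.closedBall (0 : EuclideanSpace ℝ (Fin n)) (M + R) with hK'
  have hint : Integrable (fun s => h (t - s) • g s) := conv_int h hh g hg C hC t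
  have hsplit : ∫ s, ‖h (t - s) • g s‖
      = (∫ s in K', ‖h (t - s) • g s‖) + ∫ s in K'ᶜ, ‖h (t - s) • g s‖ :=
    (integral_add_compl measurableSet_closedBall hint.norm).symm
  -- first piece
  have h1 : (∫ s in K', ‖h (t - s) • g s‖) ≤ (∫ x, ‖h x‖) * ε := by
    have step1 : (∫ s in K', ‖h (t - s) • g s‖) ≤ ∫ s in K', ‖h (t - s)‖ * ε := by
      refine setIntegral_mono_on hint.norm.integrableOn
        (((hh.comp_sub_left t).norm.mul_const ε).integrableOn) measurableSet_closedBall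
        fun s hs => ?_
      simp only [norm_smul]
      exact mul_le_mul_of_nonneg_left (hsmall s hs) (norm_nonneg _)
    have step2 : (∫ s in K', ‖h (t - s)‖ * ε) ≤ ∫ s, ‖h (t - s)‖ * ε := by
      refine setIntegral_le_integral ((hh.comp_sub_left t).norm.mul_const ε)
        (Eventually.of_forall fun s => by positivity)
    have step3 : (∫ s, ‖h (t - s)‖ * ε) = (∫ x, ‖h x‖) * ε := by
      rw [integral_mul_const, integral_sub_left_eq_self (fun x => ‖h x‖) volume t]
    linarith
  -- second piece
  set S := (Metric.closedBall (0 : EuclideanSpace ℝ (Fin n)) R)ᶜ with hS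
  set φ : EuclideanSpace ℝ (Fin n) → ℝ := fun s => S.indicator (fun x => ‖h x‖) (t - s) * C
    with hφ
  have hφint : Integrable φ := by
    have hpre : MeasurableSet ((fun s : EuclideanSpace ℝ (Fin n) => t - s) ⁻¹' S) :=
      (measurableSet_closedBall.compl).preimage (by fun_prop)
    have : Integrable (fun s => ((fun s : EuclideanSpace ℝ (Fin n) => t - s) ⁻¹' S).indicator
        (fun s => ‖h (t - s)‖) s) := (hh.comp_sub_left t).norm.indicator hpre
    refine (Integrable.mul_const ?_ C)
    refine this.congr (Eventually.of_forall fun s => ?_)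
    exact (Set.indicator_comp_right (fun s : EuclideanSpace ℝ (Fin n) => t - s)
      (s := S) (g := fun x => ‖h x‖) (x := s))
  have h2 : (∫ s in K'ᶜ, ‖h (t - s) • g s‖)
      ≤ (∫ x in S, ‖h x‖) * C := by
    have step1 : (∫ s in K'ᶜ, ‖h (t - s) • g s‖) ≤ ∫ s in K'ᶜ, φ s := by
      refine setIntegral_mono_on hint.norm.integrableOn hφint.integrableOn
        measurableSet_closedBall.compl fun s hs => ?_
      have hts : t - s ∈ S := by
        simp only [hS, Set.mem_compl_iff, Metric.mem_closedBall, dist_zero_right, not_le]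
        have hs' : M + R < ‖s‖ := by
          simpa [hK', Metric.mem_closedBall, dist_zero_right] using hs
        have := norm_sub_norm_le s t
        have h3 : ‖s - t‖ ≥ ‖s‖ - ‖t‖ := norm_sub_norm_le s t
        have : ‖t - s‖ = ‖s - t‖ := norm_sub_rev t s
        linarith
      simp only [hφ, norm_smul, Set.indicator_of_mem hts]
      exact mul_le_mul_of_nonneg_left (hC s) (norm_nonneg _)
    have step2 : (∫ s in K'ᶜ, φ s) ≤ ∫ s, φ s := by
      refine setIntegral_le_integral hφint (Eventually.of_forall fun s => ?_)
      have : 0 ≤ S.indicator (fun x => ‖h x‖) (t - s) :=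
        Set.indicator_nonneg (fun x _ => norm_nonneg _) _
      positivity
    have step3 : (∫ s, φ s) = (∫ x in S, ‖h x‖) * C := by
      rw [hφ]
      rw [integral_mul_const,
        integral_sub_left_eq_self (fun x => S.indicator (fun x => ‖h x‖) x) volume t,
        integral_indicator measurableSet_closedBall.compl]
    linarith
  calc ‖∫ s, h (t - s) • g s‖ ≤ ∫ s, ‖h (t - s) • g s‖ := norm_integral_le_integral_norm _
    _ = _ := hsplit
    _ ≤ _ := add_le_add h1 h2

lemma graph_mem {α : Type*} [MeasurableSpace α] {μ : Measure α} [CompleteSpace X]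
    (Y : Submodule ℂ (X × X)) (hY : IsClosed (Y : Set (X × X)))
    (u v : α → X) (hmem : ∀ s, (u s, v s) ∈ Y)
    (hu : Integrable u μ) (hv : Integrable v μ) :
    ((∫ s, u s ∂μ), ∫ s, v s ∂μ) ∈ Y := by
  haveI : CompleteSpace Y := hY.completeSpace_coe
  set q : α → Y := fun s => ⟨(u s, v s), hmem s⟩ with hq
  have hqm : AEStronglyMeasurable q μ := by
    rw [← Topology.IsEmbedding.aestronglyMeasurable_comp_iff Topology.IsEmbedding.subtypeVal]
    exact hu.aestronglyMeasurable.prodMk hv.aestronglyMeasurable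
  have hqi : Integrable q μ := by
    refine ⟨hqm, ?_⟩
    have := (hu.prodMk hv).hasFiniteIntegral
    exact this
  have key : (Y.subtypeL : Y →L[ℂ] X × X) (∫ s, q s ∂μ) = ∫ s, ((q s : X × X)) ∂μ :=
    (ContinuousLinearMap.integral_comp_comm Y.subtypeL hqi).symm
  have : ∫ s, ((q s : X × X)) ∂μ = ((∫ s, u s ∂μ), ∫ s, v s ∂μ) := by
    simp only [hq]
    exact integral_pair hu hv
  rw [this] at key
  rw [← key]
  exact (∫ s, q s ∂μ).2

end Helpers

/-- Invariance of Bebutov-type uniform recurrence (with respect to the binary relation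
given by a closed linear operator `A`) under convolution with an `L¹(ℝⁿ)` kernel:
`H(t) = ∫_{ℝⁿ} h(t−s) f(s) ds`. -/
theorem stmt6 {X : Type*} [NormedAddCommGroup X] [NormedSpace ℂ X] [CompleteSpace X]
    (n : ℕ) (A : X →ₗ.[ℂ] X) (hA : IsClosed (A.graph : Set (X × X)))
    (h : EuclideanSpace ℝ (Fin n) → ℂ) (hh : Integrable h)
    (f Af : EuclideanSpace ℝ (Fin n) → X) (hfc : Continuous f)
    (hfb : ∃ C, ∀ s, ‖f s‖ ≤ C)
    (hgraph : ∀ s, (f s, Af s) ∈ A.graph) (hAfb : ∃ C, ∀ s, ‖Af s‖ ≤ C)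
    (τ : ℕ → EuclideanSpace ℝ (Fin n)) (hτ : Tendsto (fun k => ‖τ k‖) atTop atTop)
    (hrec : ∀ K : Set (EuclideanSpace ℝ (Fin n)), IsCompact K →
      TendstoUniformlyOn (fun k t => f (t + τ k)) Af atTop K) :
    (∀ t, Integrable (fun s => h (t - s) • f s)) ∧
    Continuous (fun t => ∫ s, h (t - s) • f s) ∧
    (∃ C, ∀ t, ‖∫ s, h (t - s) • f s‖ ≤ C) ∧
    (∀ t, ((∫ s, h (t - s) • f s), ∫ s, h (t - s) • Af s) ∈ A.graph) ∧
    (∀ K : Set (EuclideanSpace ℝ (Fin n)), IsCompact K →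
      TendstoUniformlyOn (fun k t => ∫ s, h (t + τ k - s) • f s)
        (fun t => ∫ s, h (t - s) • Af s) atTop K) := by
  obtain ⟨Cf, hCf⟩ := hfb
  obtain ⟨CA, hCA⟩ := hAfb
  have hCf0 : 0 ≤ Cf := le_trans (norm_nonneg _) (hCf 0)
  have hCA0 : 0 ≤ CA := le_trans (norm_nonneg _) (hCA 0)
  -- Af is continuous
  have hAfc : Continuous Af := by
    rw [continuous_iff_continuousAt]
    intro x
    refine ((hrec (Metric.closedBall x 1) (isCompact_closedBall x 1)).continuousOn
      (Frequently.of_forall fun k =>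
        (hfc.comp (continuous_id.add continuous_const)).continuousOn)).continuousAt
      (Metric.closedBall_mem_nhds x one_pos)
  set I := ∫ x, ‖h x‖ with hIdef
  have hI0 : 0 ≤ I := integral_nonneg fun x => norm_nonneg _
  refine ⟨fun t => conv_int h hh f hfc.aestronglyMeasurable Cf hCf t, ?_, ?_, ?_, ?_⟩
  · -- continuity
    have hconv : (fun t => ∫ s, h (t - s) • f s)
        = (h ⋆[ContinuousLinearMap.lsmul ℂ ℂ, volume] f) :=
      funext fun t => (convolution_lsmul_swap).symm
    rw [hconv]
    have hb : BddAbove (Set.range fun x => ‖f x‖) := by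
      refine ⟨Cf, ?_⟩
      rintro y ⟨s, rfl⟩
      exact hCf s
    exact hb.continuous_convolution_right_of_integrable (ContinuousLinearMap.lsmul ℂ ℂ) hh hfc
  · exact ⟨I * Cf, fun t => conv_bound h hh f hfc.aestronglyMeasurable Cf hCf hCf0 t⟩
  · intro t
    refine graph_mem A.graph hA _ _ (fun s => ?_)
      (conv_int h hh f hfc.aestronglyMeasurable Cf hCf t)
      (conv_int h hh Af hAfc.aestronglyMeasurable CA hCA t)
    exact A.graph.smul_mem (h (t - s)) (hgraph s)
  · -- uniform convergence on compacts
    intro K hK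
    rw [Metric.tendstoUniformlyOn_iff]
    intro ε hε
    obtain ⟨M0, hM0⟩ := hK.isBounded.subset_closedBall 0
    set M := max M0 0 with hM
    have hKM : K ⊆ Metric.closedBall 0 M :=
      hM0.trans (Metric.closedBall_subset_closedBall (le_max_left _ _))
    set C := Cf + CA with hCdef
    have hC0 : 0 ≤ C := by positivity
    obtain ⟨R, hR0, hRtail⟩ := tail_small h hh (ε := ε / (2 * (C + 1))) (by positivity)
    have htail0 : 0 ≤ ∫ x in (Metric.closedBall (0 : EuclideanSpace ℝ (Fin n)) R)ᶜ, ‖h x‖ :=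
      setIntegral_nonneg measurableSet_closedBall.compl fun x _ => norm_nonneg _
    set ε₂ := ε / (2 * (I + 1)) with hε₂def
    have hε₂ : 0 < ε₂ := by positivity
    have hrecK := (hrec (Metric.closedBall 0 (M + R)) (isCompact_closedBall _ _))
    rw [Metric.tendstoUniformlyOn_iff] at hrecK
    filter_upwards [hrecK ε₂ hε₂] with k hk t htK
    -- change of variables
    have hchg : (∫ s, h (t + τ k - s) • f s) = ∫ s, h (t - s) • f (s + τ k) := by
      have := integral_sub_right_eq_self (μ := volume)
        (fun u : EuclideanSpace ℝ (Fin n) => h (t - u) • f (u + τ k)) (τ k)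
      rw [← this]
      congr 1
      ext s
      have e1 : t - (s - τ k) = t + τ k - s := by abel
      have e2 : s - τ k + τ k = s := by abel
      rw [e1, e2]
    rw [hchg]
    have hgk : ∀ s, ‖Af s - f (s + τ k)‖ ≤ C := fun s =>
      (norm_sub_le _ _).trans (by rw [hCdef]; rw [add_comm Cf CA]; exact add_le_add (hCA s) (hCf (s + τ k)))
    have hgkm : AEStronglyMeasurable (fun s => Af s - f (s + τ k)) volume :=
      (hAfc.sub (hfc.comp (continuous_id.add continuous_const))).aestronglyMeasurable
    have hdiff : (∫ s, h (t - s) • Af s) - (∫ s, h (t - s) • f (s + τ k))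
        = ∫ s, h (t - s) • (Af s - f (s + τ k)) := by
      rw [← integral_sub (conv_int h hh Af hAfc.aestronglyMeasurable CA hCA t)
        (conv_int h hh (fun s => f (s + τ k))
          (hfc.comp (continuous_id.add continuous_const)).aestronglyMeasurable Cf
          (fun s => hCf _) t)]
      congr 1
      ext s
      rw [smul_sub]
    have hsmall : ∀ s ∈ Metric.closedBall (0 : EuclideanSpace ℝ (Fin n)) (M + R),
        ‖Af s - f (s + τ k)‖ ≤ ε₂ := by
      intro s hs
      have := hk s hs
      rw [dist_eq_norm] at this
      exact this.le
    have hest := conv_est h hh (fun s => Af s - f (s + τ k)) hgkm C hgk hC0 R M ε₂ hε₂.le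
      hsmall t (by simpa [Metric.mem_closedBall, dist_zero_right] using hKM htK)
    rw [← hIdef] at hest
    rw [dist_eq_norm, hdiff]
    have h1 : I * ε₂ ≤ ε / 2 := by
      calc I * ε₂ ≤ (I + 1) * ε₂ := by nlinarith
        _ = (I + 1) * (ε / (2 * (I + 1))) := by rw [hε₂def]
        _ = ε / 2 := by field_simp
    have h2 : (∫ x in (Metric.closedBall (0 : EuclideanSpace ℝ (Fin n)) R)ᶜ, ‖h x‖) * C
        < ε / 2 := by
      calc (∫ x in (Metric.closedBall (0 : EuclideanSpace ℝ (Fin n)) R)ᶜ, ‖h x‖) * C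
          ≤ (∫ x in (Metric.closedBall (0 : EuclideanSpace ℝ (Fin n)) R)ᶜ, ‖h x‖) * (C + 1) := by
            nlinarith
        _ < (ε / (2 * (C + 1))) * (C + 1) := by
            apply mul_lt_mul_of_pos_right hRtail; positivity
        _ = ε / 2 := by field_simp
    calc ‖∫ s, h (t - s) • (Af s - f (s + τ k))‖
        ≤ I * ε₂ + (∫ x in (Metric.closedBall (0 : EuclideanSpace ℝ (Fin n)) R)ᶜ, ‖h x‖) * C :=
          hest
      _ < ε / 2 + ε / 2 := add_lt_add_of_le_of_lt h1 h2
      _ = ε := by ring
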